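/- Let a>0, b>0, c≥−1/b, φ₀∈ℝ, and let B be the 2×2 complex matrix with entries B₁₁=√(1+bc)·e^{iφ₀}, B₁₂=b, B₂₁=c, B₂₂=√(1+bc)·e^{−iφ₀}. Suppose ψ:[-a,a]→ℂ is continuously differentiable and satisfies ψ(a)=B₁₁ψ(−a)+B₁₂ψ′(−a) and ψ′(a)=B₂₁ψ(−a)+B₂₂ψ′(−a). Then the function χ(x):=conj(ψ(−x)) also satisfies χ(a)=B₁₁χ(−a)+B₁₂χ′(−a) and χ′(a)=B₂₁χ(−a)+B₂₂χ′(−a). -/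

import Mathlib

/-- the connected PT-symmetric boundary conditions with matrix
`B = (√(1+bc) e^{iφ₀}, b; c, √(1+bc) e^{-iφ₀})` are invariant under the PT
operation `ψ ↦ conj(ψ(-·))`. -/
theorem pt_connected_bc_pt_invariant
    (a b c φ₀ : ℝ) (ha : 0 < a) (hb : 0 < b) (hc : -(1 / b) ≤ c)
    (ψ ψ' : ℝ → ℂ)
    (hd : ∀ x ∈ Set.Icc (-a) a, HasDerivAt ψ (ψ' x) x)
    (hcont : ContinuousOn ψ' (Set.Icc (-a) a))
    (hbc1 : ψ a = ((Real.sqrt (1 + b * c) : ℝ) : ℂ) * Complex.exp (Complex.I * (φ₀ : ℂ)) * ψ (-a)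
      + (b : ℂ) * ψ' (-a))
    (hbc2 : ψ' a = (c : ℂ) * ψ (-a)
      + ((Real.sqrt (1 + b * c) : ℝ) : ℂ) * Complex.exp (-(Complex.I * (φ₀ : ℂ))) * ψ' (-a))
    (χ : ℝ → ℂ) (hχ : χ = fun x => (starRingEnd ℂ) (ψ (-x))) :
    ∃ χ' : ℝ → ℂ,
      (∀ x ∈ Set.Icc (-a) a, HasDerivAt χ (χ' x) x) ∧
      χ a = ((Real.sqrt (1 + b * c) : ℝ) : ℂ) * Complex.exp (Complex.I * (φ₀ : ℂ)) * χ (-a)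
        + (b : ℂ) * χ' (-a) ∧
      χ' a = (c : ℂ) * χ (-a)
        + ((Real.sqrt (1 + b * c) : ℝ) : ℂ) * Complex.exp (-(Complex.I * (φ₀ : ℂ))) * χ' (-a) := by
  set s : ℂ := ((Real.sqrt (1 + b * c) : ℝ) : ℂ) with hs_def
  set E : ℂ := Complex.exp (Complex.I * (φ₀ : ℂ)) with hE_def
  set F : ℂ := Complex.exp (-(Complex.I * (φ₀ : ℂ))) with hF_def
  have hbc0 : (0:ℝ) ≤ 1 + b * c := by
    have h1 : b * -(1/b) ≤ b * c := mul_le_mul_of_nonneg_left hc (le_of_lt hb)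
    have hb' : b * -(1/b) = -1 := by field_simp
    nlinarith
  have hs2 : s * s = 1 + (b:ℂ) * (c:ℂ) := by
    rw [hs_def, ← Complex.ofReal_mul, Real.mul_self_sqrt hbc0]
    push_cast
    ring
  have hexp : E * F = 1 := by
    rw [hE_def, hF_def, ← Complex.exp_add, add_neg_cancel, Complex.exp_zero]
  have key1 : ψ (-a) = s * F * ψ a - (b : ℂ) * ψ' a := by
    rw [hbc1, hbc2]
    linear_combination (-(E * F) * ψ (-a)) * hs2 - ((1 + (b:ℂ)*c) * ψ (-a)) * hexp
  have key2 : ψ' (-a) = -(c:ℂ) * ψ a + s * E * ψ' a := by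
    rw [hbc1, hbc2]
    linear_combination (-(E * F) * ψ' (-a)) * hs2 - ((1 + (b:ℂ)*c) * ψ' (-a)) * hexp
  refine ⟨fun x => -(starRingEnd ℂ) (ψ' (-x)), ?_, ?_, ?_⟩
  · intro x hx
    have hx' : -x ∈ Set.Icc (-a) a := by
      simp only [Set.mem_Icc] at hx ⊢
      constructor <;> linarith [hx.1, hx.2]
    have h1 : HasDerivAt (fun y => ψ (-y)) (-(ψ' (-x))) x := by
      simpa [Function.comp_def] using HasDerivAt.scomp x (hd (-x) hx') (hasDerivAt_neg x)
    have h2 := h1.star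
    rw [hχ]
    simpa using h2
  · rw [hχ]
    simp only [neg_neg]
    have h := congrArg (starRingEnd ℂ) key1
    simp only [map_sub, map_mul, Complex.conj_ofReal, hs_def, hF_def, ← Complex.exp_conj,
      map_neg, Complex.conj_I, Complex.conj_ofReal] at h
    rw [show (-(-Complex.I * (φ₀:ℂ))) = Complex.I * (φ₀:ℂ) by ring] at h
    rw [← hE_def, ← hs_def] at h
    linear_combination h
  · rw [hχ]
    simp only [neg_neg]
    have h := congrArg (starRingEnd ℂ) key2
    simp only [map_add, map_mul, map_neg, Complex.conj_ofReal] at h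
    rw [show (starRingEnd ℂ) E = F by
      rw [hE_def, hF_def, ← Complex.exp_conj, map_mul, Complex.conj_I, Complex.conj_ofReal]
      ring_nf] at h
    rw [show (starRingEnd ℂ) s = s by rw [hs_def, Complex.conj_ofReal]] at h
    linear_combination -h
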